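/- Let D ∈ E^k with embedding dimension d ≤ k-2, let i < j, and consider the pencil D(ε) = D + ε E_{ij}. Let G = K†(D) = Q Λ Qᵀ with Λ = blkdiag(0, Λ₊), Λ₊ ∈ S^d_{++}, and let Ḡ_E = Qᵀ K†(E_{ij}) Q be blocked conformally as [Ḡ₁₁, Ḡ₁₂; Ḡ₁₂ᵀ, Ḡ₂₂] with Ḡ₂₂ of size d. Suppose ε ∈ I_ε (the open interval on which Λ₊ + ε Ḡ₂₂ ≻ 0, which contains 0) and ε(Ḡ₁₁ - ε Ḡ₁₂ (Λ₊ + ε Ḡ₂₂)^{-1} Ḡ₂₁) ⪰ 0. Then D(ε) ∈ E^k and the embedding dimension of D(ε) is at least d. Moreover, if Ḡ₁₁ = 0 then the embedding dimension of D(ε) is exactly d. -/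

import Mathlib

open Matrix BigOperators

noncomputable section

def unitMatG {ι : Type*} [Fintype ι] [DecidableEq ι] (i j : ι) : Matrix ι ι ℝ :=
  Matrix.single i j 1 + Matrix.single j i 1

def Jmat (ι : Type*) [Fintype ι] [DecidableEq ι] : Matrix ι ι ℝ :=
  (1 : Matrix ι ι ℝ) - (Fintype.card ι : ℝ)⁻¹ • Matrix.of (fun _ _ => (1 : ℝ))

/-- `K†(D) = -½ J D J` (for hollow symmetric `D`, the centered Gram matrix). -/
def cKdag {ι : Type*} [Fintype ι] [DecidableEq ι] (D : Matrix ι ι ℝ) : Matrix ι ι ℝ :=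
  (-(1 / 2 : ℝ)) • (Jmat ι * D * Jmat ι)

/-- Schoenberg characterization of the EDM cone: hollow, symmetric, and the
centered Gram matrix is PSD. -/
def IsEDMmat {ι : Type*} [Fintype ι] [DecidableEq ι] (D : Matrix ι ι ℝ) : Prop :=
  D.IsSymm ∧ (∀ i, D i i = 0) ∧ (cKdag D).PosSemidef


lemma conjT_eq {m n : Type*} (A : Matrix m n ℝ) : Aᴴ = Aᵀ := by
  ext a b; simp [Matrix.conjTranspose_apply]

lemma psd_smul {n : Type*} [Fintype n] {c : ℝ} (hc : 0 ≤ c) {P : Matrix n n ℝ}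
    (hP : P.PosSemidef) : (c • P).PosSemidef := by
  rw [posSemidef_iff_dotProduct_mulVec]
  constructor
  · unfold Matrix.IsHermitian
    rw [conjTranspose_smul, hP.1]; simp
  · intro x
    rw [smul_mulVec, dotProduct_smul]
    exact mul_nonneg hc (hP.dotProduct_mulVec_nonneg x)

lemma psd_neg_eq_zero {n : Type*} [Fintype n] [DecidableEq n] {P : Matrix n n ℝ}
    (hp : P.PosSemidef) (hn : (-P).PosSemidef) : P = 0 := by
  have hq : ∀ x : n → ℝ, x ⬝ᵥ P *ᵥ x = 0 := by
    intro x
    have h1 := hp.dotProduct_mulVec_nonneg x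
    have h2 := hn.dotProduct_mulVec_nonneg x
    simp only [star_trivial, neg_mulVec, dotProduct_neg] at h1 h2
    linarith
  have hsym : ∀ a b, P b a = P a b := by
    intro a b
    have := congrFun (congrFun hp.1 a) b
    simpa [Matrix.conjTranspose_apply] using this
  have hdiag : ∀ a, P a a = 0 := by
    intro a
    have := hq (Pi.single a 1)
    simpa [dotProduct, Matrix.mulVec, Pi.single_apply] using this
  have hcross : ∀ a b, Pi.single a (1:ℝ) ⬝ᵥ P *ᵥ Pi.single b 1 = P a b := by
    intro a b
    rw [Matrix.mulVec_single]
    simp [single_dotProduct]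
  ext a b
  have := hq (Pi.single a 1 + Pi.single b 1)
  rw [Matrix.mulVec_add, dotProduct_add, add_dotProduct, add_dotProduct,
    hcross, hcross, hcross, hcross, hdiag, hdiag, hsym] at this
  simp only [Matrix.zero_apply]
  linarith

lemma cKdag_linear {ι : Type*} [Fintype ι] [DecidableEq ι] (D E : Matrix ι ι ℝ) (ε : ℝ) :
    cKdag (D + ε • E) = cKdag D + ε • cKdag E := by
  simp only [cKdag, Matrix.mul_add, Matrix.add_mul, Matrix.mul_smul, Matrix.smul_mul, smul_add]
  rw [smul_comm]

lemma Jmat_symm (ι : Type*) [Fintype ι] [DecidableEq ι] : (Jmat ι)ᵀ = Jmat ι := by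
  unfold Jmat
  ext a b
  simp [Matrix.transpose_apply, Matrix.one_apply, eq_comm]

lemma cKdag_symm {ι : Type*} [Fintype ι] [DecidableEq ι] {D : Matrix ι ι ℝ} (hD : D.IsSymm) :
    (cKdag D).IsSymm := by
  unfold Matrix.IsSymm cKdag
  rw [Matrix.transpose_smul, Matrix.transpose_mul, Matrix.transpose_mul, Jmat_symm,
    hD, Matrix.mul_assoc]
section Sel
variable {α β : Type*} [Fintype α] [Fintype β] [DecidableEq α] [DecidableEq β]

def selR (α β : Type*) [DecidableEq α] [DecidableEq β] : Matrix (α ⊕ β) β ℝ :=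
  Matrix.of fun r c => if r = Sum.inr c then 1 else 0

lemma mul_selR {γ : Type*} (M : Matrix γ (α ⊕ β) ℝ) :
    M * selR α β = Matrix.of (fun r c => M r (Sum.inr c)) := by
  ext r c
  simp [Matrix.mul_apply, selR]

lemma selR_T_mul {γ : Type*} [Fintype γ] (M : Matrix (α ⊕ β) γ ℝ) :
    (selR α β)ᵀ * M = Matrix.of (fun a c => M (Sum.inr a) c) := by
  ext a c
  simp [Matrix.mul_apply, selR]

lemma selR_conj (N : Matrix (α ⊕ β) (α ⊕ β) ℝ) :
    (selR α β)ᵀ * N * selR α β = N.toBlocks₂₂ := by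
  rw [mul_selR, selR_T_mul]
  rfl

lemma selR_fromBlocks (X : Matrix β β ℝ) :
    selR α β * X * (selR α β)ᵀ = Matrix.fromBlocks 0 0 0 X := by
  ext r c
  rcases r with r | r <;> rcases c with c | c <;>
    simp [Matrix.mul_apply, selR, Matrix.fromBlocks, Finset.sum_ite_eq]

lemma rank_toBlocks₂₂_le (N : Matrix (α ⊕ β) (α ⊕ β) ℝ) :
    N.toBlocks₂₂.rank ≤ N.rank := by
  rw [← selR_conj N]
  exact le_trans (Matrix.rank_mul_le_left _ _)
    (le_trans (Matrix.rank_mul_le_right _ _) le_rfl)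

lemma rank_fromBlocks_zero (X : Matrix β β ℝ) :
    (Matrix.fromBlocks (0 : Matrix α α ℝ) 0 0 X).rank = X.rank := by
  refine le_antisymm ?_ ?_
  · rw [← selR_fromBlocks]
    exact le_trans (Matrix.rank_mul_le_left _ _) (Matrix.rank_mul_le_right _ _)
  · have := rank_toBlocks₂₂_le (α := α) (Matrix.fromBlocks 0 0 0 X)
    rwa [Matrix.toBlocks_fromBlocks₂₂] at this

end Sel

/-- Sufficiency of the EDM condition: if `ε` lies in the interval where
`Λ₊ + ε Ḡ₂₂ ≻ 0` and the scaled Schur complement is PSD, then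
`D(ε) = D + ε E_{ij}` is an EDM of embedding dimension at least `d`;
if moreover `Ḡ₁₁ = 0`, the embedding dimension is exactly `d`. -/
theorem EDM_condition_sufficient (s d : ℕ) (hs : 2 ≤ s)
    (D : Matrix (Fin s ⊕ Fin d) (Fin s ⊕ Fin d) ℝ) (hD : IsEDMmat D)
    (hrank : (cKdag D).rank = d)
    (i j : Fin s ⊕ Fin d) (hij : i ≠ j)
    (Q : Matrix (Fin s ⊕ Fin d) (Fin s ⊕ Fin d) ℝ) (hQ : Q * Qᵀ = 1)
    (Λp : Matrix (Fin d) (Fin d) ℝ) (hΛp : Λp.PosDef)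
    (hG : cKdag D = Q * Matrix.fromBlocks 0 0 0 Λp * Qᵀ)
    (ε : ℝ) (hε : ε ≠ 0)
    (G11 : Matrix (Fin s) (Fin s) ℝ) (G12 : Matrix (Fin s) (Fin d) ℝ)
    (G21 : Matrix (Fin d) (Fin s) ℝ) (G22 : Matrix (Fin d) (Fin d) ℝ)
    (h11 : G11 = (Qᵀ * cKdag (unitMatG i j) * Q).toBlocks₁₁)
    (h12 : G12 = (Qᵀ * cKdag (unitMatG i j) * Q).toBlocks₁₂)
    (h21 : G21 = (Qᵀ * cKdag (unitMatG i j) * Q).toBlocks₂₁)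
    (h22 : G22 = (Qᵀ * cKdag (unitMatG i j) * Q).toBlocks₂₂)
    (hIeps : (Λp + ε • G22).PosDef)
    (hSchur : (ε • (G11 - ε • (G12 * (Λp + ε • G22)⁻¹ * G21))).PosSemidef) :
    IsEDMmat (D + ε • unitMatG i j) ∧
    d ≤ (cKdag (D + ε • unitMatG i j)).rank ∧
    (G11 = 0 → (cKdag (D + ε • unitMatG i j)).rank = d) ∧
    (G11 - ε • (G12 * (Λp + ε • G22)⁻¹ * G21) = 0 →
      (cKdag (D + ε • unitMatG i j)).rank = d) := by
  set X : Matrix (Fin d) (Fin d) ℝ := Λp + ε • G22 with hXdef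
  -- basic symmetry facts
  have hEsymm : (unitMatG i j).IsSymm := by
    unfold Matrix.IsSymm unitMatG
    ext a b
    simp only [Matrix.transpose_apply, Matrix.add_apply, Matrix.single, Matrix.of_apply]
    rw [add_comm]
    exact congrArg₂ (· + ·) (if_congr and_comm rfl rfl) (if_congr and_comm rfl rfl)
  have hEdiag : ∀ k, unitMatG i j k k = 0 := by
    intro k
    have h1 : ¬(i = k ∧ j = k) := by rintro ⟨rfl, rfl⟩; exact hij rfl
    have h2 : ¬(j = k ∧ i = k) := by rintro ⟨rfl, rfl⟩; exact hij rfl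
    simp only [unitMatG, Matrix.add_apply, Matrix.single, Matrix.of_apply]
    rw [if_neg h1, if_neg h2, add_zero]
  have hGEs : (cKdag (unitMatG i j)).IsSymm := cKdag_symm hEsymm
  have hQ' : Qᵀ * Q = 1 := mul_eq_one_comm.mp hQ
  have hB : Qᵀ * cKdag (unitMatG i j) * Q = Matrix.fromBlocks G11 G12 G21 G22 := by
    rw [h11, h12, h21, h22, Matrix.fromBlocks_toBlocks]
  have hBsymm : (Qᵀ * cKdag (unitMatG i j) * Q)ᵀ = Qᵀ * cKdag (unitMatG i j) * Q := by
    rw [Matrix.transpose_mul, Matrix.transpose_mul, Matrix.transpose_transpose, hGEs.eq,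
      Matrix.mul_assoc]
  have hG21 : G12ᵀ = G21 := by
    rw [hB, Matrix.fromBlocks_transpose] at hBsymm
    have := congrArg Matrix.toBlocks₂₁ hBsymm
    simpa [Matrix.toBlocks_fromBlocks₂₁] using this
  -- the conjugated pencil
  set N : Matrix (Fin s ⊕ Fin d) (Fin s ⊕ Fin d) ℝ :=
    Matrix.fromBlocks (ε • G11) (ε • G12) (ε • G21) X with hNdef
  have hGEc : cKdag (unitMatG i j) = Q * Matrix.fromBlocks G11 G12 G21 G22 * Qᵀ := by
    rw [← hB, show Q * (Qᵀ * cKdag (unitMatG i j) * Q) * Qᵀ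
        = Q * Qᵀ * cKdag (unitMatG i j) * (Q * Qᵀ) from by simp only [Matrix.mul_assoc], hQ,
      Matrix.one_mul, Matrix.mul_one]
  have hNsum : N = Matrix.fromBlocks 0 0 0 Λp + ε • Matrix.fromBlocks G11 G12 G21 G22 := by
    rw [Matrix.fromBlocks_smul, Matrix.fromBlocks_add]
    simp [hNdef, hXdef]
  have key : cKdag (D + ε • unitMatG i j) = Q * N * Qᵀ := by
    rw [cKdag_linear, hG, hGEc, hNsum, Matrix.mul_add, Matrix.add_mul,
      Matrix.mul_smul, Matrix.smul_mul]
  -- invertibility facts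
  haveI : Invertible X := hIeps.isUnit.invertible
  have hXu : IsUnit X := hIeps.isUnit
  -- positive semidefiniteness of N
  have hconj : (ε • G12)ᴴ = ε • G21 := by
    rw [conjT_eq, Matrix.transpose_smul, hG21]
  have hSchur' : (ε • G11) - (ε • G12) * X⁻¹ * (ε • G12)ᴴ
      = ε • (G11 - ε • (G12 * X⁻¹ * G21)) := by
    rw [hconj, Matrix.smul_mul, Matrix.smul_mul, Matrix.mul_smul, smul_sub, smul_smul]
  have hNpsd : N.PosSemidef := by
    rw [hNdef, ← hconj]
    exact (Matrix.PosDef.fromBlocks₂₂ (ε • G11) (ε • G12) hIeps).mpr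
      (hSchur' ▸ hSchur)
  have hpsd : (cKdag (D + ε • unitMatG i j)).PosSemidef := by
    rw [key, ← conjT_eq Q]
    exact hNpsd.mul_mul_conjTranspose_same Q
  -- rank facts
  have hdetQ : IsUnit Q.det := by
    have : Q.det * Qᵀ.det = 1 := by rw [← Matrix.det_mul, hQ, Matrix.det_one]
    exact IsUnit.of_mul_eq_one _ this
  have hdetQt : IsUnit Qᵀ.det := by rw [Matrix.det_transpose]; exact hdetQ
  have hrankN : (cKdag (D + ε • unitMatG i j)).rank = N.rank := by
    rw [key, Matrix.mul_assoc, Matrix.rank_mul_eq_right_of_isUnit_det Q _ hdetQ,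
      Matrix.rank_mul_eq_left_of_isUnit_det Qᵀ N hdetQt]
  have hXrank : X.rank = d := by
    rw [Matrix.rank_of_isUnit X hXu, Fintype.card_fin]
  have hlow : d ≤ N.rank := by
    have h := rank_toBlocks₂₂_le N
    rw [hNdef, Matrix.toBlocks_fromBlocks₂₂, hXrank] at h
    exact h
  -- the degenerate rank computation
  have bullet4 : G11 - ε • (G12 * X⁻¹ * G21) = 0 →
      (cKdag (D + ε • unitMatG i j)).rank = d := by
    intro hS0
    have hG11 : ε • G11 = (ε • G12) * (X⁻¹ * (ε • G21)) := by
      have h1 : G11 = ε • (G12 * X⁻¹ * G21) := by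
        have := sub_eq_zero.mp hS0; exact this
      rw [h1, Matrix.smul_mul, Matrix.mul_smul, Matrix.mul_smul, smul_smul, smul_smul,
        Matrix.mul_assoc]
    have hfact : N = (Matrix.fromBlocks 1 (ε • G12 * X⁻¹) 0 1)
        * Matrix.fromBlocks 0 0 0 X
        * Matrix.fromBlocks 1 0 (X⁻¹ * (ε • G21)) 1 := by
      rw [Matrix.fromBlocks_multiply, Matrix.fromBlocks_multiply]
      simp only [Matrix.mul_zero, Matrix.zero_mul, Matrix.mul_one, Matrix.one_mul,
        add_zero, zero_add]
      rw [Matrix.mul_assoc (ε • G12) X⁻¹ X,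
        Matrix.nonsing_inv_mul X ((Matrix.isUnit_iff_isUnit_det X).mp hXu), Matrix.mul_one,
        ← Matrix.mul_assoc X X⁻¹ (ε • G21),
        Matrix.mul_nonsing_inv X ((Matrix.isUnit_iff_isUnit_det X).mp hXu), Matrix.one_mul,
        ← hG11, hNdef]
    have hdetL : IsUnit (Matrix.fromBlocks (1 : Matrix (Fin s) (Fin s) ℝ) (ε • G12 * X⁻¹) 0 1).det := by
      rw [Matrix.det_fromBlocks_zero₂₁]; simp
    have hdetR : IsUnit (Matrix.fromBlocks (1 : Matrix (Fin s) (Fin s) ℝ) 0 (X⁻¹ * (ε • G21)) 1).det := by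
      rw [Matrix.det_fromBlocks_zero₁₂]; simp
    rw [hrankN, hfact, Matrix.mul_assoc,
      Matrix.rank_mul_eq_right_of_isUnit_det _ _ hdetL,
      Matrix.rank_mul_eq_left_of_isUnit_det _ _ hdetR,
      rank_fromBlocks_zero, hXrank]
  refine ⟨⟨?_, ?_, hpsd⟩, ?_, ?_, bullet4⟩
  · show (D + ε • unitMatG i j)ᵀ = _
    rw [Matrix.transpose_add, Matrix.transpose_smul, hD.1, hEsymm]
  · intro k
    simp [Matrix.add_apply, hD.2.1 k, hEdiag k]
  · rw [hrankN]; exact hlow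
  · intro h110
    apply bullet4
    have hpsd2 : (G12 * X⁻¹ * G12ᵀ).PosSemidef := by
      rw [← conjT_eq]
      exact (hIeps.inv.posSemidef).mul_mul_conjTranspose_same G12
    have hneg : (-(ε • (G11 - ε • (G12 * X⁻¹ * G21)))).PosSemidef := by
      have : -(ε • (G11 - ε • (G12 * X⁻¹ * G21))) = (ε * ε) • (G12 * X⁻¹ * G12ᵀ) := by
        rw [h110, hG21, zero_sub, smul_neg, neg_neg, smul_smul]
      rw [this]
      exact psd_smul (mul_self_nonneg ε) hpsd2
    have h0 : ε • (G11 - ε • (G12 * X⁻¹ * G21)) = 0 := psd_neg_eq_zero hSchur hneg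
    rcases smul_eq_zero.mp h0 with h | h
    · exact absurd h hε
    · exact h
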